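/- If G is a graph containing a cycle, with girth g(G), maximum degree Δ(G) ≥ k, and k ≥ 3, then L_k(G) ≥ g(G) + k − 3. -/

import Mathlib

open Finset

namespace LimPackAux

open SimpleGraph Walk

end LimPackAux

/-- `B` is a `k`-limited packing in `G`: every closed neighbourhood contains
at most `k` vertices of `B`. -/
def limPack {V : Type*} [Fintype V] [DecidableEq V] (G : SimpleGraph V)
    [DecidableRel G.Adj] (k : ℕ) (B : Finset V) : Prop :=
  ∀ v : V, (insert v (G.neighborFinset v) ∩ B).card ≤ k

/-- The `k`-limited packing number `L_k(G)`. -/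
noncomputable def limPackNum {V : Type*} [Fintype V] [DecidableEq V] (G : SimpleGraph V)
    [DecidableRel G.Adj] (k : ℕ) : ℕ :=
  sSup {n | ∃ B : Finset V, limPack G k B ∧ B.card = n}

namespace LimPackAux

open SimpleGraph Walk

variable {V : Type*} [DecidableEq V] {G : SimpleGraph V}

lemma girth_le_len {a : V} (w : G.Walk a a) (hw : w.IsCycle) : G.girth ≤ w.length := by
  have h1 : G.egirth ≤ (w.length : ℕ∞) :=
    iInf_le_of_le a (iInf_le_of_le w (iInf_le _ hw))
  have h2 := ENat.toNat_le_toNat h1 (by simp : (w.length : ℕ∞) ≠ ⊤)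
  simpa [SimpleGraph.girth] using h2

lemma length_rotate' {a x : V} (c : G.Walk a a) (h : x ∈ c.support) :
    (c.rotate x h).length = c.length := by
  have h1 := congrArg Walk.length (c.take_spec h)
  rw [length_append] at h1
  simp only [Walk.rotate, length_append]
  omega

lemma closed_mem_tail {a : V} (d : G.Walk a a) (hd : ¬ d.Nil) : a ∈ d.support.tail := by
  obtain ⟨b, h, q, rfl⟩ := Walk.not_nil_iff.mp hd
  simpa using q.end_mem_support

lemma closed_toFinset_tail [DecidableEq V] {a : V} (d : G.Walk a a) (hd : ¬ d.Nil) :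
    d.support.toFinset = d.support.tail.toFinset := by
  conv_lhs => rw [d.support_eq_cons]
  rw [List.toFinset_cons, Finset.insert_eq_self]
  simpa using closed_mem_tail d hd

lemma rotate_toFinset [DecidableEq V] {a x : V} {c : G.Walk a a} (hc : c.IsCycle)
    (h : x ∈ c.support) :
    (c.rotate x h).support.toFinset = c.support.toFinset := by
  have hnn : ¬ c.Nil := by
    have := hc.three_le_length
    rw [nil_iff_length_eq]; omega
  have hnn' : ¬ (c.rotate x h).Nil := by
    have := (hc.rotate h).three_le_length
    rw [nil_iff_length_eq]; omega
  rw [closed_toFinset_tail _ hnn, closed_toFinset_tail _ hnn']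
  exact List.toFinset_eq_of_perm _ _ (c.support_rotate x h).perm

lemma concat_isPath {a b c : V} {q : G.Walk a b} (hq : q.IsPath) (h : G.Adj b c)
    (hc : c ∉ q.support) : (q.concat h).IsPath := by
  rw [Walk.isPath_def, support_concat]
  rw [Walk.isPath_def] at hq
  simp [List.nodup_append, hq, hc]
  exact fun x hx hxc => hc (hxc ▸ hx)

lemma edge_start : ∀ {v y x : V} (r : G.Walk v y), r.IsPath → s(v, x) ∈ r.edges →
    x = r.getVert 1
  | v, _, x, .nil, _, hx => by simp at hx
  | v, y, x, .cons h q, hp, hx => by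
    rw [edges_cons, List.mem_cons] at hx
    rcases hx with hx | hx
    · rw [Sym2.eq_iff] at hx
      rcases hx with ⟨-, rfl⟩ | ⟨h1, h2⟩
      · simp [getVert_cons_succ]
      · exact absurd h1 h.ne
    · exact absurd (Walk.fst_mem_support_of_mem_edges q hx)
        ((Walk.cons_isPath_iff _ _).1 hp).2

lemma takeUntil_not_end {b x u : V} {p : G.Walk b x} (hp : p.IsPath) (h : u ∈ p.support)
    (hux : u ≠ x) : x ∉ (p.takeUntil u h).support := by
  have hspec := p.take_spec h
  have hnodup : ((p.takeUntil u h).support ++ (p.dropUntil u h).support.tail).Nodup := by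
    rw [← support_append, hspec]; exact hp.support_nodup
  have hxdrop : x ∈ (p.dropUntil u h).support.tail :=
    end_mem_tail_support_of_ne hux (p.dropUntil u h)
  intro hxtake
  exact (List.disjoint_of_nodup_append hnodup) hxtake hxdrop

/-- On a shortest cycle through `v`, the neighbors of `v` lying on the cycle are
among two special vertices. -/
lemma key_mem {v : V} (w : G.Walk v v) (hw : w.IsCycle) (hg : G.girth = w.length) :
    ∃ b c : V, ∀ x, G.Adj v x → x ∈ w.support → x = b ∨ x = c := by
  have hnn : ¬ w.Nil := by
    have := hw.three_le_length
    rw [nil_iff_length_eq]; omega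
  obtain ⟨b, hadj, p, rfl⟩ := Walk.not_nil_iff.mp hnn
  rw [Walk.cons_isCycle_iff] at hw
  refine ⟨b, p.reverse.getVert 1, fun x hvx hxs => ?_⟩
  have hxv : x ≠ v := fun h => G.loopless.irrefl v (h ▸ hvx)
  have hxp : x ∈ p.support := by
    rw [support_cons, List.mem_cons] at hxs
    tauto
  by_cases he : s(v, x) ∈ p.edges
  · right
    have h1 : s(v, x) ∈ p.reverse.edges := by
      rw [edges_reverse, List.mem_reverse]; exact he
    exact edge_start p.reverse hw.1.reverse h1
  · left
    have hr : (p.dropUntil x hxp).IsPath := hw.1.dropUntil hxp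
    have hre : s(v, x) ∉ (p.dropUntil x hxp).edges :=
      fun h => he (edges_dropUntil_subset _ _ h)
    have hcyc : (Walk.cons hvx (p.dropUntil x hxp)).IsCycle :=
      (Walk.cons_isCycle_iff _ _).2 ⟨hr, hre⟩
    have hgl := girth_le_len _ hcyc
    rw [length_cons] at hgl
    have hsplit : (p.takeUntil x hxp).length + (p.dropUntil x hxp).length = p.length := by
      have h1 := congrArg Walk.length (p.take_spec hxp)
      rwa [length_append] at h1
    rw [length_cons] at hg
    have hlen0 : (p.takeUntil x hxp).length = 0 := by omega
    exact (Walk.eq_of_length_eq_zero hlen0).symm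

lemma cycle_toFinset_card [DecidableEq V] {a : V} {w : G.Walk a a} (hw : w.IsCycle) :
    w.support.toFinset.card = w.length := by
  have hnn : ¬ w.Nil := by
    have := hw.three_le_length
    rw [nil_iff_length_eq]; omega
  rw [closed_toFinset_tail _ hnn, List.card_toFinset, hw.support_nodup.dedup]
  have := w.length_support
  have ht : w.support.tail.length + 1 = w.support.length := by
    rw [w.support_eq_cons]; simp
  omega

/-- The support of a shortest cycle is a `3`-limited packing. -/
lemma pack3 [Fintype V] [DecidableEq V] [DecidableRel G.Adj] {a : V} (w : G.Walk a a)
    (hw : w.IsCycle) (hg : G.girth = w.length) : limPack G 3 w.support.toFinset := by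
  intro v
  by_cases hv : v ∈ w.support
  · -- rotate the cycle to start at `v`
    have hw' := hw.rotate hv
    have hlen : (w.rotate v hv).length = w.length := length_rotate' w hv
    have hsupp := rotate_toFinset hw hv
    obtain ⟨b, c, hbc⟩ := key_mem (w.rotate v hv) hw' (by rw [hlen]; exact hg)
    rw [← hsupp]
    refine le_trans (Finset.card_le_card (show _ ⊆ ({v, b, c} : Finset V) from fun z hz => ?_)) ?_
    · simp only [Finset.mem_inter, Finset.mem_insert, SimpleGraph.mem_neighborFinset,
        List.mem_toFinset, Finset.mem_singleton] at hz ⊢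
      rcases hz with ⟨rfl | hadj, hzs⟩
      · exact Or.inl rfl
      · rcases hbc z hadj hzs with h | h
        · exact Or.inr (Or.inl h)
        · exact Or.inr (Or.inr h)
    · refine le_trans (Finset.card_insert_le _ _) ?_
      have := Finset.card_insert_le b ({c} : Finset V)
      simp at this ⊢
      omega
  · by_cases hlen : w.length ≤ 3
    · refine le_trans (Finset.card_le_card Finset.inter_subset_right) ?_
      rw [cycle_toFinset_card hw]; exact hlen
    · -- length ≥ 4 : at most 2 neighbors on the cycle
      refine le_trans ?_ (by norm_num : (2:ℕ) ≤ 3)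
      by_contra hcon
      push_neg at hcon
      obtain ⟨x, y, z, hxmem, hymem, hzmem, hxy, hxz, hyz⟩ :=
        Finset.two_lt_card_iff.mp hcon
      -- facts about elements of the intersection
      have hfact : ∀ u, u ∈ insert v (G.neighborFinset v) ∩ w.support.toFinset →
          G.Adj v u ∧ u ∈ w.support := by
        intro u hu
        simp only [Finset.mem_inter, Finset.mem_insert, SimpleGraph.mem_neighborFinset,
          List.mem_toFinset] at hu
        rcases hu with ⟨rfl | hadj, hus⟩
        · exact absurd hus hv
        · exact ⟨hadj, hus⟩
      obtain ⟨hvx, hxs⟩ := hfact x hxmem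
      obtain ⟨hvy, hys⟩ := hfact y hymem
      obtain ⟨hvz, hzs⟩ := hfact z hzmem
      -- rotate at x
      have hwx := hw.rotate hxs
      have hlenx : (w.rotate x hxs).length = w.length := length_rotate' w hxs
      have hsuppx := rotate_toFinset hw hxs
      have hnn : ¬ (w.rotate x hxs).Nil := by
        have := hwx.three_le_length
        rw [nil_iff_length_eq]; omega
      have hvnx : v ∉ (w.rotate x hxs).support := by
        intro h
        exact hv (by rwa [← List.mem_toFinset, hsuppx, List.mem_toFinset] at h)
      have hyx : y ∈ (w.rotate x hxs).support := by
        rwa [← List.mem_toFinset, hsuppx, List.mem_toFinset]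
      have hzx : z ∈ (w.rotate x hxs).support := by
        rwa [← List.mem_toFinset, hsuppx, List.mem_toFinset]
      clear hsuppx
      obtain ⟨b, hxb, p, hcons⟩ := Walk.not_nil_iff.mp hnn
      rw [hcons] at hwx hlenx hvnx hyx hzx
      rw [Walk.cons_isCycle_iff] at hwx
      rw [length_cons] at hlenx
      have hvp : v ∉ p.support := fun h => hvnx (by rw [support_cons]; exact List.mem_cons_of_mem _ h)
      have hvnex : v ≠ x := fun h => hv (h ▸ hxs)
      -- the key claim
      have key : ∀ u, G.Adj v u → u ∈ p.support → u ≠ x → u = p.getVert 1 := by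
        intro u hvu hup hux
        have hq0 : (p.takeUntil u hup).IsPath := hwx.1.takeUntil hup
        have hr : (p.dropUntil u hup).IsPath := hwx.1.dropUntil hup
        have hxq : x ∉ (p.takeUntil u hup).support := takeUntil_not_end hwx.1 hup hux
        have hvq : v ∉ (p.takeUntil u hup).support :=
          fun h => hvp (support_takeUntil_subset _ _ h)
        have hvr : v ∉ (p.dropUntil u hup).support :=
          fun h => hvp (support_dropUntil_subset _ _ h)
        have hsplit : (p.takeUntil u hup).length + (p.dropUntil u hup).length = p.length := by
          have h1 := congrArg Walk.length (p.take_spec hup)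
          rwa [length_append] at h1
        -- cycle A : v → x → b → ... → u → v
        have hinner : (Walk.cons hxb (p.takeUntil u hup)).IsPath :=
          (Walk.cons_isPath_iff _ _).2 ⟨hq0, hxq⟩
        have hvinner : v ∉ (Walk.cons hxb (p.takeUntil u hup)).support := by
          rw [support_cons, List.mem_cons]
          push_neg
          exact ⟨hvnex, hvq⟩
        have hA : (Walk.cons hvx (((Walk.cons hxb (p.takeUntil u hup))).concat hvu.symm)).IsCycle := by
          rw [Walk.cons_isCycle_iff]
          constructor
          · exact concat_isPath hinner hvu.symm hvinner
          · rw [edges_concat, List.concat_eq_append, List.mem_append, List.mem_singleton]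
            rintro (h | h)
            · exact hvinner (Walk.fst_mem_support_of_mem_edges _ h)
            · rw [Sym2.eq_iff] at h
              rcases h with ⟨h1, -⟩ | ⟨-, h2⟩
              · exact hvu.ne h1
              · exact hux h2.symm
        have hgA := girth_le_len _ hA
        rw [length_cons, length_concat, length_cons] at hgA
        -- cycle B : v → u → ... → x → v
        have hB : (Walk.cons hvu ((p.dropUntil u hup).concat hvx.symm)).IsCycle := by
          rw [Walk.cons_isCycle_iff]
          constructor
          · exact concat_isPath hr hvx.symm hvr
          · rw [edges_concat, List.concat_eq_append, List.mem_append, List.mem_singleton]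
            rintro (h | h)
            · exact hvr (Walk.fst_mem_support_of_mem_edges _ h)
            · rw [Sym2.eq_iff] at h
              rcases h with ⟨h1, -⟩ | ⟨-, h2⟩
              · exact hvnex h1
              · exact hux h2
        have hgB := girth_le_len _ hB
        rw [length_cons, length_concat] at hgB
        -- conclude the position of u
        have ht1 : (p.takeUntil u hup).length = 1 := by omega
        have := p.take_spec hup
        conv_rhs => rw [← this]
        rw [getVert_append, ht1]
        simp
      have hy1 := key y hvy (by
        rw [support_cons, List.mem_cons] at hyx
        tauto) hxy.symm
      have hz1 := key z hvz (by
        rw [support_cons, List.mem_cons] at hzx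
        tauto) hxz.symm
      exact hyz (hy1.trans hz1.symm)


variable [Fintype V] [DecidableRel G.Adj]

lemma extend_pack [Nonempty V] {j : ℕ} {B : Finset V} (hB : limPack G j B)
    (hj : j ≤ G.maxDegree) :
    ∃ B' : Finset V, limPack G (j+1) B' ∧ B'.card = B.card + 1 := by
  obtain ⟨u, hu⟩ : ∃ u, u ∉ B := by
    by_contra h
    push_neg at h
    obtain ⟨v, hv⟩ := G.exists_maximal_degree_vertex
    have h1 := hB v
    have h2 : B = Finset.univ := Finset.eq_univ_iff_forall.2 h
    rw [h2, Finset.inter_univ,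
      Finset.card_insert_of_notMem (G.notMem_neighborFinset_self v),
      G.card_neighborFinset_eq_degree] at h1
    omega
  refine ⟨insert u B, fun v => ?_, Finset.card_insert_of_notMem hu⟩
  have hsub : insert v (G.neighborFinset v) ∩ insert u B ⊆
      insert u (insert v (G.neighborFinset v) ∩ B) := by
    intro z hz
    simp only [Finset.mem_inter, Finset.mem_insert] at hz ⊢
    tauto
  calc (insert v (G.neighborFinset v) ∩ insert u B).card
      ≤ (insert u (insert v (G.neighborFinset v) ∩ B)).card := Finset.card_le_card hsub
    _ ≤ (insert v (G.neighborFinset v) ∩ B).card + 1 := Finset.card_insert_le _ _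
    _ ≤ j + 1 := by have := hB v; omega

end LimPackAux

theorem stmt_9 {V : Type*} [Fintype V] [DecidableEq V] (G : SimpleGraph V)
    [DecidableRel G.Adj] (hG : ¬ G.IsAcyclic) (k : ℕ) (hk : 3 ≤ k)
    (hΔ : k ≤ G.maxDegree) :
    G.girth + k - 3 ≤ limPackNum G k := by
  obtain ⟨a, w, hw, hg⟩ := SimpleGraph.exists_girth_eq_length.2 hG
  have : Nonempty V := ⟨a⟩
  have hpacks : ∀ i : ℕ, 3 + i ≤ k →
      ∃ B : Finset V, limPack G (3 + i) B ∧ B.card = G.girth + i := by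
    intro i
    induction i with
    | zero =>
        intro _
        exact ⟨w.support.toFinset, LimPackAux.pack3 w hw hg,
          by have := LimPackAux.cycle_toFinset_card hw; omega⟩
    | succ i ih =>
        intro hik
        obtain ⟨B, hB, hcard⟩ := ih (by omega)
        obtain ⟨B', hB', hcard'⟩ := LimPackAux.extend_pack hB (by omega)
        exact ⟨B', hB', by omega⟩
  obtain ⟨B, hB, hcard⟩ := hpacks (k - 3) (by omega)
  have hk3 : 3 + (k - 3) = k := by omega
  rw [hk3] at hB
  have hbdd : BddAbove {n | ∃ B : Finset V, limPack G k B ∧ B.card = n} := by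
    refine ⟨Fintype.card V, fun n hn => ?_⟩
    obtain ⟨B, -, rfl⟩ := hn
    exact Finset.card_le_univ B
  have hle : G.girth + (k - 3) ≤ limPackNum G k :=
    le_csSup hbdd ⟨B, hB, hcard⟩
  omega
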